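/- For integers 1 ≤ d ≤ N and real M ≥ 1, the following identity holds: ∫₀¹ d·C(N,d)·(ε/M)^d·(1 − ε/M)^{N−d} dε = Σ_{i=d}^{N} C(N,i)·(1/M)^i·(1 − 1/M)^{N−i}·(d/(i+1)). -/

import Mathlib

open intervalIntegral

lemma beta_nat : ∀ (b a : ℕ), ∫ x in (0:ℝ)..1, x ^ a * (1 - x) ^ b
    = (a.factorial * b.factorial : ℝ) / (a + b + 1).factorial := by
  intro b
  induction b with
  | zero =>
    intro a
    simp [integral_pow, Nat.factorial_succ]
    rw [eq_div_iff (by positivity)]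
    field_simp
  | succ b IH =>
    intro a
    have key : ∫ x in (0:ℝ)..1, ((a:ℝ)+1) * (x ^ a * (1-x)^(b+1)) - ((b:ℝ)+1) * (x^(a+1) * (1-x)^b) = 0 := by
      have : ∀ x ∈ Set.uIcc (0:ℝ) 1, HasDerivAt (fun x : ℝ => x ^ (a+1) * (1-x)^(b+1))
          (((a:ℝ)+1) * (x ^ a * (1-x)^(b+1)) - ((b:ℝ)+1) * (x^(a+1) * (1-x)^b)) x := by
        intro x _
        have h1 : HasDerivAt (fun x : ℝ => x ^ (a+1)) (((a:ℝ)+1) * x ^ a) x := by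
          simpa using hasDerivAt_pow (a+1) x
        have h2 : HasDerivAt (fun x : ℝ => (1-x)^(b+1)) (-(((b:ℝ)+1) * (1-x)^b)) x := by
          have := (hasDerivAt_pow (b+1) (1-x)).comp x ((hasDerivAt_id x).const_sub 1)
          simpa [Function.comp_def] using this
        refine (h1.mul h2).congr_deriv ?_
        ring
      rw [integral_eq_sub_of_hasDerivAt (fun x hx => this x hx)]
      · simp
      · apply Continuous.intervalIntegrable
        continuity
    rw [intervalIntegral.integral_sub, intervalIntegral.integral_const_mul,
        intervalIntegral.integral_const_mul, sub_eq_zero, IH] at key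
    · have ha : ((a:ℝ)+1) ≠ 0 := by positivity
      rw [Nat.factorial_succ b,
        show a + (b+1) + 1 = (a+b+1)+1 by ring, Nat.factorial_succ (a+b+1)]
      rw [Nat.factorial_succ a, show a + 1 + b + 1 = (a+b+1)+1 by ring,
        Nat.factorial_succ (a+b+1)] at key
      push_cast at key ⊢
      rw [eq_div_iff (by positivity)]
      have hne : ((a:ℝ) + (b:ℝ) + 1 + 1) * (a+b+1).factorial ≠ 0 := by positivity
      field_simp at key
      ring_nf at key ⊢
      apply mul_left_cancel₀ ha
      linear_combination ((a:ℝ)+1) * key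
    · apply Continuous.intervalIntegrable; continuity
    · apply Continuous.intervalIntegrable; continuity

theorem stmt_15 (N d : ℕ) (hd : 1 ≤ d) (hdN : d ≤ N) (M : ℝ) (hM : 1 ≤ M) :
    ∫ ε in (0:ℝ)..1, (d : ℝ) * (N.choose d : ℝ) * (ε / M) ^ d * (1 - ε / M) ^ (N - d) =
      ∑ i ∈ Finset.Icc d N,
        (N.choose i : ℝ) * (1 / M) ^ i * (1 - 1 / M) ^ (N - i) * ((d : ℝ) / (i + 1)) := by
  have hM0 : M ≠ 0 := by linarith
  have h1 : ∀ ε : ℝ, (d : ℝ) * (N.choose d : ℝ) * (ε / M) ^ d * (1 - ε / M) ^ (N - d)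
      = ∑ k ∈ Finset.range (N - d + 1),
        ((d : ℝ) * (N.choose d : ℝ) * ((N-d).choose k : ℝ) * (1/M)^(N-k) * (1-1/M)^k)
          * (ε ^ d * (1-ε) ^ (N-d-k)) := by
    intro ε
    have hsplit : (1 - ε/M : ℝ) = (1 - 1/M) + (1-ε) * (1/M) := by field_simp; ring
    rw [hsplit, add_pow, Finset.mul_sum]
    refine Finset.sum_congr rfl fun k hk => ?_
    rw [Finset.mem_range] at hk
    have e : ((1:ℝ)/M)^d * (1/M)^(N-d-k) = (1/M)^(N-k) := by
      rw [← pow_add]; congr 1; omega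
    have hdm : (ε / M : ℝ) = ε * (1/M) := by ring
    rw [hdm, mul_pow ε (1/M), mul_pow (1-ε) (1/M)]
    linear_combination ((d:ℝ) * (N.choose d : ℝ) * ((N-d).choose k : ℝ) * (1-1/M)^k
      * ε ^ d * (1-ε)^(N-d-k)) * e
  simp_rw [h1]
  rw [intervalIntegral.integral_finset_sum (fun k _ => by
      apply Continuous.intervalIntegrable; fun_prop)]
  simp_rw [intervalIntegral.integral_const_mul, beta_nat]
  refine Finset.sum_nbij' (fun k => N - k) (fun i => N - i)
    (fun k hk => ?_) (fun i hi => ?_) (fun k hk => ?_) (fun i hi => ?_) (fun k hk => ?_)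
  · rw [Finset.mem_range] at hk; rw [Finset.mem_Icc]; omega
  · rw [Finset.mem_Icc] at hi; rw [Finset.mem_range]; omega
  · rw [Finset.mem_range] at hk; omega
  · rw [Finset.mem_Icc] at hi; omega
  · rw [Finset.mem_range] at hk
    have hk' : k ≤ N - d := by omega
    set n := N - k with hn
    have hi1 : d ≤ n := by omega
    have hi2 : n ≤ N := by omega
    have e1 : N - n = k := by omega
    have e2 : d + (N - d - k) + 1 = n + 1 := by omega
    have e3 : (N - d).choose k = (N - d).choose (n - d) := by
      rw [show n - d = (N - d) - k by omega]
      exact (Nat.choose_symm hk').symm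
    have e4 : N - d - k = n - d := by omega
    have h4 : N.choose n * n.choose d = N.choose d * (N - d).choose (n - d) :=
      Nat.choose_mul hi1
    have h5 : n.choose d * d.factorial * (n - d).factorial = n.factorial :=
      Nat.choose_mul_factorial_mul_factorial hi1
    have Rh4 : ((N.choose n : ℝ)) * (n.choose d : ℝ)
        = (N.choose d : ℝ) * ((N - d).choose (n - d) : ℝ) := by exact_mod_cast h4
    have Rh5 : ((n.choose d : ℝ)) * (d.factorial : ℝ) * ((n - d).factorial : ℝ)
        = (n.factorial : ℝ) := by exact_mod_cast h5
    have Rh7 : (N.choose d : ℝ) * ((N - d).choose (n - d) : ℝ) * (d.factorial : ℝ)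
        * ((n - d).factorial : ℝ) = (N.choose n : ℝ) * (n.factorial : ℝ) := by
      linear_combination (-((d.factorial : ℝ) * ((n - d).factorial : ℝ))) * Rh4
        + (N.choose n : ℝ) * Rh5
    have key : (d : ℝ) * (N.choose d : ℝ) * ((N - d).choose (n - d) : ℝ)
        * ((d.factorial : ℝ) * ((n - d).factorial : ℝ)
          / (((n : ℝ) + 1) * (n.factorial : ℝ)))
        = (N.choose n : ℝ) * ((d : ℝ) / ((n : ℝ) + 1)) := by
      have hp1 : ((n : ℝ) + 1) * (n.factorial : ℝ) ≠ 0 := by positivity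
      field_simp
      linear_combination Rh7
    rw [e1, e2, e3, e4, Nat.factorial_succ n]
    push_cast
    push_cast at key
    linear_combination ((1 / M : ℝ) ^ n * (1 - 1 / M) ^ k) * key
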